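/- For α ≥ 0, the area of the Grushin isoperimetric set E_α equals ((α+1)/(α+2)) · P_α(E_α), where P_α(E_α) = 2∫_0^π sin^α(t) dt. Equivalently, 4∫_0^1 φ_α(x) dx = ((α+1)/(α+2)) · 2∫_0^π sin^α(t) dt. -/

import Mathlib

open Real intervalIntegral MeasureTheory

lemma sinpow_cont {β : ℝ} (hβ : 0 ≤ β) : Continuous fun t => Real.sin t ^ β :=
  Real.continuous_sin.rpow_const fun _ => Or.inr hβ

lemma rpow_succ_mul {s : ℝ} (hs : 0 ≤ s) {β : ℝ} (hβ : 0 ≤ β) :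
    s * s ^ (β + 1) = s ^ (β + 2) := by
  rw [show β + 2 = 1 + (β + 1) by ring,
    Real.rpow_add' (y := 1) (z := β + 1) hs (by positivity), Real.rpow_one]

lemma sq_mul_rpow {s : ℝ} (hs : 0 ≤ s) {β : ℝ} (hβ : 0 ≤ β) :
    s ^ (2 : ℕ) * s ^ β = s ^ (β + 2) := by
  rw [show β + 2 = (2 : ℝ) + β by ring,
    Real.rpow_add' (y := (2:ℝ)) (z := β) hs (by positivity),
    show s ^ ((2 : ℝ)) = s ^ (2 : ℕ) by rw [← Real.rpow_natCast]; norm_num]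

lemma sin_nonneg_of_uIcc {θ : ℝ} (hθ : θ ∈ Set.uIcc (0:ℝ) (Real.pi/2)) :
    0 ≤ Real.sin θ := by
  rw [Set.uIcc_of_le (by positivity)] at hθ
  exact Real.sin_nonneg_of_nonneg_of_le_pi hθ.1 (by linarith [hθ.2, Real.pi_pos])

lemma sin_recurrence (α : ℝ) (hα : 0 ≤ α) :
    (α + 2) * ∫ θ in (0:ℝ)..(Real.pi/2), Real.sin θ ^ (α + 2) =
      (α + 1) * ∫ θ in (0:ℝ)..(Real.pi/2), Real.sin θ ^ α := by
  have hc2 : Continuous fun t => Real.sin t ^ (α + 2) := sinpow_cont (by linarith)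
  have hc0 : Continuous fun t => Real.sin t ^ α := sinpow_cont hα
  have hderiv : ∀ θ ∈ Set.uIcc (0:ℝ) (Real.pi/2),
      HasDerivAt (fun θ => -Real.cos θ * Real.sin θ ^ (α + 1))
        ((α + 2) * Real.sin θ ^ (α + 2) - (α + 1) * Real.sin θ ^ α) θ := by
    intro θ hθ
    have hs := sin_nonneg_of_uIcc hθ
    have h1 : HasDerivAt (fun θ => Real.sin θ ^ (α + 1))
        ((α + 1) * Real.sin θ ^ α * Real.cos θ) θ := by
      have := (Real.hasDerivAt_rpow_const (x := Real.sin θ) (p := α + 1)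
        (Or.inr (by linarith))).comp θ (Real.hasDerivAt_sin θ)
      rw [add_sub_cancel_right] at this; exact this
    have h2 : HasDerivAt (fun θ => -Real.cos θ) (Real.sin θ) θ := by
      have := (Real.hasDerivAt_cos θ).neg; rw [neg_neg] at this; exact this
    have := h2.mul h1
    refine this.congr_deriv (Eq.symm ?_)
    have e1 := rpow_succ_mul hs hα
    have e2 := sq_mul_rpow hs hα
    have e3 : Real.cos θ ^ (2:ℕ) = 1 - Real.sin θ ^ (2:ℕ) := Real.cos_sq' θ
    linear_combination -e1 + (α + 1) * Real.sin θ ^ α * e3 - (α + 1) * e2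
  have hint : IntervalIntegrable
      (fun θ => (α + 2) * Real.sin θ ^ (α + 2) - (α + 1) * Real.sin θ ^ α)
      MeasureTheory.volume 0 (Real.pi/2) :=
    (((continuous_const.mul hc2)).sub ((continuous_const.mul hc0))).intervalIntegrable _ _
  have key := intervalIntegral.integral_eq_sub_of_hasDerivAt hderiv hint
  rw [intervalIntegral.integral_sub (f := fun θ => (α + 2) * Real.sin θ ^ (α + 2))
      (g := fun θ => (α + 1) * Real.sin θ ^ α) (((continuous_const.mul hc2)).intervalIntegrable _ _)
      (((continuous_const.mul hc0)).intervalIntegrable _ _),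
    intervalIntegral.integral_const_mul, intervalIntegral.integral_const_mul] at key
  simp [Real.cos_pi_div_two, Real.sin_pi_div_two, Real.zero_rpow (by positivity : α + 1 ≠ 0)]
    at key
  linarith [key]

lemma area_eq (α : ℝ) (hα : 0 ≤ α) :
    (∫ x in (0 : ℝ)..1, ∫ t in Real.arcsin x..(Real.pi / 2), Real.sin t ^ (α + 1)) =
      ∫ θ in (0:ℝ)..(Real.pi/2), Real.sin θ ^ (α + 2) := by
  have hc1 : Continuous fun t => Real.sin t ^ (α + 1) := sinpow_cont (by linarith)
  have hc2 : Continuous fun t => Real.sin t ^ (α + 2) := sinpow_cont (by linarith)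
  set F : ℝ → ℝ := fun θ => ∫ t in θ..(Real.pi/2), Real.sin t ^ (α + 1) with hF
  -- F is differentiable with derivative -(sin θ)^(α+1)
  have hFd : ∀ θ : ℝ, HasDerivAt F (-(Real.sin θ ^ (α + 1))) θ := fun θ =>
    intervalIntegral.integral_hasDerivAt_left (hc1.intervalIntegrable _ _)
      (hc1.stronglyMeasurableAtFilter _ _) hc1.continuousAt
  have hFc : Continuous F :=
    continuous_iff_continuousAt.2 fun θ => (hFd θ).continuousAt
  -- substitution x = sin θ
  have hsub := intervalIntegral.integral_comp_smul_deriv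
    (f := Real.sin) (f' := Real.cos) (g := fun x => F (Real.arcsin x))
    (a := 0) (b := Real.pi/2)
    (fun x _ => Real.hasDerivAt_sin x) Real.continuous_cos.continuousOn
    (hFc.comp Real.continuous_arcsin)
  rw [Real.sin_zero, Real.sin_pi_div_two] at hsub
  rw [← hsub]
  -- rewrite integrand using arcsin ∘ sin = id on [0, π/2]
  have hcong : ∀ θ ∈ Set.uIcc (0:ℝ) (Real.pi/2),
      Real.cos θ • ((fun x => F (Real.arcsin x)) ∘ Real.sin) θ = Real.cos θ * F θ := by
    intro θ hθ
    rw [Set.uIcc_of_le (by positivity)] at hθ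
    have : Real.arcsin (Real.sin θ) = θ :=
      Real.arcsin_sin (by linarith [hθ.1, Real.pi_pos]) (by linarith [hθ.2, Real.pi_pos])
    simp [this]
  rw [intervalIntegral.integral_congr hcong]
  -- integration by parts via H θ = sin θ * F θ
  have hHd : ∀ θ ∈ Set.uIcc (0:ℝ) (Real.pi/2),
      HasDerivAt (fun θ => Real.sin θ * F θ)
        (Real.cos θ * F θ - Real.sin θ ^ (α + 2)) θ := by
    intro θ hθ
    have hs := sin_nonneg_of_uIcc hθ
    have := (Real.hasDerivAt_sin θ).mul (hFd θ)
    refine this.congr_deriv (Eq.symm ?_)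
    rw [← rpow_succ_mul hs hα]
    ring
  have hint : IntervalIntegrable (fun θ => Real.cos θ * F θ - Real.sin θ ^ (α + 2))
      MeasureTheory.volume 0 (Real.pi/2) :=
    ((Real.continuous_cos.mul hFc).sub hc2).intervalIntegrable _ _
  have key := intervalIntegral.integral_eq_sub_of_hasDerivAt hHd hint
  rw [intervalIntegral.integral_sub (f := fun θ => Real.cos θ * F θ)
      (g := fun θ => Real.sin θ ^ (α + 2)) ((Real.continuous_cos.mul hFc).intervalIntegrable _ _)
      (hc2.intervalIntegrable _ _)] at key
  have hF0 : F (Real.pi/2) = 0 := intervalIntegral.integral_same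
  rw [Real.sin_pi_div_two, Real.sin_zero, hF0] at key
  simp at key
  linarith [key]

lemma perim_eq (α : ℝ) (hα : 0 ≤ α) :
    (∫ t in (0:ℝ)..Real.pi, Real.sin t ^ α) =
      2 * ∫ θ in (0:ℝ)..(Real.pi/2), Real.sin θ ^ α := by
  have hc : Continuous fun t => Real.sin t ^ α := sinpow_cont hα
  have hsplit := intervalIntegral.integral_add_adjacent_intervals
    (a := (0:ℝ)) (b := Real.pi/2) (c := Real.pi) (μ := MeasureTheory.volume)
    (hc.intervalIntegrable _ _) (hc.intervalIntegrable _ _)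
  have hrefl : (∫ t in (Real.pi/2)..Real.pi, Real.sin t ^ α) =
      ∫ θ in (0:ℝ)..(Real.pi/2), Real.sin θ ^ α := by
    have := intervalIntegral.integral_comp_sub_left
      (a := (0:ℝ)) (b := Real.pi/2) (fun t => Real.sin t ^ α) Real.pi
    rw [show Real.pi - Real.pi/2 = Real.pi/2 by ring, sub_zero] at this
    rw [← this]
    apply intervalIntegral.integral_congr
    intro θ _
    simp [Real.sin_pi_sub]
  linarith [hsplit, hrefl]

theorem grushin_isoperimetric_area_perimeter (α : ℝ) (hα : 0 ≤ α) :
    4 * (∫ x in (0 : ℝ)..1, ∫ t in Real.arcsin x..(Real.pi / 2), Real.sin t ^ (α + 1)) =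
      ((α + 1) / (α + 2)) * (2 * ∫ t in (0 : ℝ)..Real.pi, Real.sin t ^ α) := by
  rw [area_eq α hα, perim_eq α hα]
  have hrec := sin_recurrence α hα
  have h2 : (α + 2) ≠ 0 := by positivity
  field_simp
  linarith [hrec]
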